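/- Define a_n to be the number of permutations π of {1,...,n} having no index i such that π_i is simultaneously a left-to-right maximum and a right-to-left minimum of π, with a_0 = 1. Then for all n ≥ 1, n! = a_n + ∑_{i=0}^{n-1} a_i · (n-1-i)!. -/

import Mathlib

/-- `a n` is the number of permutations of `{1,…,n}` having no position `i`
whose entry is both a left-to-right maximum and a right-to-left minimum
(so `a 0 = 1`). -/
def avoidCount (n : ℕ) : ℕ :=
  (Finset.univ.filter fun π : Equiv.Perm (Fin n) =>
    ¬ ∃ i : Fin n, (∀ j : Fin n, j < i → π j < π i) ∧
      (∀ j : Fin n, i < j → π i < π j)).card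

namespace AvoidAux

open Finset Equiv

/-- Strong fixed point: entry is both a left-to-right maximum and a
right-to-left minimum. -/
def SFP {n : ℕ} (π : Equiv.Perm (Fin n)) (i : Fin n) : Prop :=
  (∀ j : Fin n, j < i → π j < π i) ∧ (∀ j : Fin n, i < j → π i < π j)

instance {n : ℕ} (π : Equiv.Perm (Fin n)) (i : Fin n) : Decidable (SFP π i) := by
  unfold SFP; infer_instance

lemma avoidCount_eq (m : ℕ) :
    avoidCount m = (Finset.univ.filter fun τ : Equiv.Perm (Fin m) =>
      ¬ ∃ w : Fin m, SFP τ w).card := by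
  unfold avoidCount
  congr 1

lemma sfp_val {n : ℕ} (π : Equiv.Perm (Fin n)) (i : Fin n) (h : SFP π i) :
    (π i : ℕ) = (i : ℕ) := by
  have h1 : (Finset.univ.filter fun j : Fin n => π j < π i)
      = Finset.univ.filter fun j : Fin n => j < i := by
    ext j
    simp only [Finset.mem_filter, Finset.mem_univ, true_and]
    constructor
    · intro hj
      rcases lt_trichotomy j i with h' | h' | h'
      · exact h'
      · subst h'; exact absurd hj (lt_irrefl _)
      · exact absurd hj (not_lt.mpr (h.2 j h').le)
    · exact h.1 j
  have h2 : (Finset.univ.filter fun j : Fin n => π j < π i)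
      = Finset.image π.symm (Finset.univ.filter fun x : Fin n => x < π i) := by
    ext j
    simp only [Finset.mem_filter, Finset.mem_univ, true_and, Finset.mem_image,
      Equiv.symm_apply_eq]
    constructor
    · intro hj; exact ⟨π j, hj, rfl⟩
    · rintro ⟨x, hx, rfl⟩; exact hx
  have h3 : (Finset.univ.filter fun x : Fin n => x < π i) = Finset.Iio (π i) := by
    ext x; simp
  have h4 : (Finset.univ.filter fun j : Fin n => j < i) = Finset.Iio i := by
    ext x; simp
  have c1 := congrArg Finset.card h1
  rw [h2, h3, h4, Finset.card_image_of_injective _ π.symm.injective,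
    Fin.card_Iio, Fin.card_Iio] at c1
  exact c1

lemma minIdx_aux {n : ℕ} {π : Equiv.Perm (Fin n)} (h : ∃ w : Fin n, SFP π w) :
    ∃ k : ℕ, ∃ hk : k < n, SFP π ⟨k, hk⟩ := by
  obtain ⟨w, hw⟩ := h
  exact ⟨w.val, w.isLt, by simpa using hw⟩

/-- The minimal index of a strong fixed point, or `n` if there is none. -/
def minIdx {n : ℕ} (π : Equiv.Perm (Fin n)) : ℕ :=
  if h : ∃ w : Fin n, SFP π w then Nat.find (minIdx_aux h) else n

lemma minIdx_le {n : ℕ} (π : Equiv.Perm (Fin n)) : minIdx π ≤ n := by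
  unfold minIdx
  split
  · next h =>
    obtain ⟨hk, -⟩ := Nat.find_spec (minIdx_aux h)
    exact hk.le
  · exact le_rfl

lemma minIdx_eq_n_iff {n : ℕ} (π : Equiv.Perm (Fin n)) :
    minIdx π = n ↔ ¬ ∃ i : Fin n, SFP π i := by
  unfold minIdx
  split
  · next h =>
    obtain ⟨hk, hs⟩ := Nat.find_spec (minIdx_aux h)
    constructor
    · intro he; omega
    · intro hno; exact absurd h hno
  · next h =>
    constructor
    · intro _; exact h
    · intro _; rfl

lemma minIdx_eq_iff {n : ℕ} (π : Equiv.Perm (Fin n)) (i : ℕ) (hi : i < n) :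
    minIdx π = i ↔ (SFP π ⟨i, hi⟩ ∧ ∀ j : Fin n, (j : ℕ) < i → ¬ SFP π j) := by
  unfold minIdx
  split
  · next h =>
    rw [Nat.find_eq_iff]
    constructor
    · rintro ⟨⟨hk, hs⟩, hmin⟩
      exact ⟨hs, fun j hj hsj => hmin j.val hj ⟨j.isLt, by simpa using hsj⟩⟩
    · rintro ⟨hs, hmin⟩
      refine ⟨⟨hi, hs⟩, fun k hk hpk => ?_⟩
      obtain ⟨hk2, hs2⟩ := hpk
      exact hmin ⟨k, hk2⟩ hk hs2
  · next h =>
    constructor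
    · intro he; omega
    · rintro ⟨hs, -⟩; exact absurd ⟨⟨i, hi⟩, hs⟩ h

section Build

variable {i j : ℕ}

/-- The underlying map of the block permutation. -/
def bfun (τ : Equiv.Perm (Fin i)) (ρ : Equiv.Perm (Fin j)) (k : Fin (i + 1 + j)) :
    Fin (i + 1 + j) :=
  if h : (k : ℕ) < i then ⟨τ ⟨k, h⟩, by have := (τ ⟨k, h⟩).isLt; omega⟩
  else if h2 : (k : ℕ) = i then k
  else ⟨i + 1 + ρ ⟨(k : ℕ) - (i + 1), by have := k.isLt; omega⟩,
    by have := (ρ ⟨(k : ℕ) - (i + 1), by have := k.isLt; omega⟩).isLt; omega⟩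

lemma bfun_val_lt (τ : Equiv.Perm (Fin i)) (ρ : Equiv.Perm (Fin j))
    (k : Fin (i + 1 + j)) (h : (k : ℕ) < i) :
    (bfun τ ρ k : ℕ) = τ ⟨k, h⟩ := by
  rw [bfun, dif_pos h]

lemma bfun_val_eq (τ : Equiv.Perm (Fin i)) (ρ : Equiv.Perm (Fin j))
    (k : Fin (i + 1 + j)) (h : (k : ℕ) = i) :
    (bfun τ ρ k : ℕ) = i := by
  rw [bfun, dif_neg (by omega), dif_pos h, h]

lemma bfun_val_gt (τ : Equiv.Perm (Fin i)) (ρ : Equiv.Perm (Fin j))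
    (k : Fin (i + 1 + j)) (h : i < (k : ℕ)) :
    (bfun τ ρ k : ℕ) = i + 1 + ρ ⟨(k : ℕ) - (i + 1), by have := k.isLt; omega⟩ := by
  rw [bfun, dif_neg (by omega), dif_neg (by omega)]

lemma bfun_injective (τ : Equiv.Perm (Fin i)) (ρ : Equiv.Perm (Fin j)) :
    Function.Injective (bfun τ ρ) := by
  intro a b hab
  have hab' : (bfun τ ρ a : ℕ) = (bfun τ ρ b : ℕ) := by rw [hab]
  rcases lt_trichotomy (a : ℕ) i with ha | ha | ha <;>
    rcases lt_trichotomy (b : ℕ) i with hb | hb | hb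
  · rw [bfun_val_lt τ ρ a ha, bfun_val_lt τ ρ b hb] at hab'
    have h1 : τ ⟨a, ha⟩ = τ ⟨b, hb⟩ := Fin.ext hab'
    have h2 := τ.injective h1
    rw [Fin.ext_iff] at h2
    exact Fin.ext h2
  · rw [bfun_val_lt τ ρ a ha, bfun_val_eq τ ρ b hb] at hab'
    have := (τ ⟨a, ha⟩).isLt; omega
  · rw [bfun_val_lt τ ρ a ha, bfun_val_gt τ ρ b hb] at hab'
    have := (τ ⟨a, ha⟩).isLt; omega
  · rw [bfun_val_eq τ ρ a ha, bfun_val_lt τ ρ b hb] at hab'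
    have := (τ ⟨b, hb⟩).isLt; omega
  · exact Fin.ext (by omega)
  · rw [bfun_val_eq τ ρ a ha, bfun_val_gt τ ρ b hb] at hab'; omega
  · rw [bfun_val_gt τ ρ a ha, bfun_val_lt τ ρ b hb] at hab'
    have := (τ ⟨b, hb⟩).isLt; omega
  · rw [bfun_val_gt τ ρ a ha, bfun_val_eq τ ρ b hb] at hab'; omega
  · rw [bfun_val_gt τ ρ a ha, bfun_val_gt τ ρ b hb] at hab'
    have h1 : ρ ⟨(a : ℕ) - (i + 1), by have := a.isLt; omega⟩
        = ρ ⟨(b : ℕ) - (i + 1), by have := b.isLt; omega⟩ := Fin.ext (by omega)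
    have h2 := ρ.injective h1
    rw [Fin.ext_iff] at h2
    simp only at h2
    exact Fin.ext (by omega)

/-- The block permutation `τ ⊕ 1 ⊕ ρ` of `Fin (i+1+j)`. -/
noncomputable def buildPerm (τ : Equiv.Perm (Fin i)) (ρ : Equiv.Perm (Fin j)) :
    Equiv.Perm (Fin (i + 1 + j)) :=
  Equiv.ofBijective (bfun τ ρ) (Finite.injective_iff_bijective.mp (bfun_injective τ ρ))

lemma buildPerm_apply (τ : Equiv.Perm (Fin i)) (ρ : Equiv.Perm (Fin j))
    (k : Fin (i + 1 + j)) : buildPerm τ ρ k = bfun τ ρ k := rfl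

lemma buildPerm_val_lt (τ : Equiv.Perm (Fin i)) (ρ : Equiv.Perm (Fin j))
    (k : Fin (i + 1 + j)) (x : Fin i) (h : (k : ℕ) < i) (hx : (x : ℕ) = (k : ℕ)) :
    (buildPerm τ ρ k : ℕ) = τ x := by
  rw [buildPerm_apply, bfun_val_lt τ ρ k h]
  exact (congrArg (fun z : Fin i => ((τ z : Fin i) : ℕ)) (Fin.ext hx)).symm

lemma buildPerm_val_eq (τ : Equiv.Perm (Fin i)) (ρ : Equiv.Perm (Fin j))
    (k : Fin (i + 1 + j)) (h : (k : ℕ) = i) :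
    (buildPerm τ ρ k : ℕ) = i := by
  rw [buildPerm_apply, bfun_val_eq τ ρ k h]

lemma buildPerm_val_gt (τ : Equiv.Perm (Fin i)) (ρ : Equiv.Perm (Fin j))
    (k : Fin (i + 1 + j)) (x : Fin j) (h : i < (k : ℕ)) (hx : (x : ℕ) = (k : ℕ) - (i + 1)) :
    (buildPerm τ ρ k : ℕ) = i + 1 + ρ x := by
  rw [buildPerm_apply, bfun_val_gt τ ρ k h]
  exact (congrArg (fun z : Fin j => i + 1 + ((ρ z : Fin j) : ℕ)) (Fin.ext hx)).symm

end Build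

lemma fiber_card (i j : ℕ) :
    ((Finset.univ : Finset (Equiv.Perm (Fin (i + 1 + j)))).filter
      fun σ => minIdx σ = i).card = avoidCount i * j.factorial := by
  have hi : i < i + 1 + j := by omega
  have hle : i ≤ i + 1 + j := by omega
  have hprod : avoidCount i * j.factorial
      = ((Finset.univ.filter fun τ : Equiv.Perm (Fin i) => ¬ ∃ w : Fin i, SFP τ w)
          ×ˢ (Finset.univ : Finset (Equiv.Perm (Fin j)))).card := by
    rw [Finset.card_product, Finset.card_univ, Fintype.card_perm, Fintype.card_fin,
      avoidCount_eq]
  rw [hprod]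
  refine (Finset.card_bij (fun p _ => buildPerm p.1 p.2) ?_ ?_ ?_).symm
  · -- membership
    rintro ⟨τ, ρ⟩ hp
    rw [Finset.mem_product, Finset.mem_filter] at hp
    obtain ⟨⟨-, hτ⟩, -⟩ := hp
    rw [Finset.mem_filter]
    refine ⟨Finset.mem_univ _, ?_⟩
    rw [minIdx_eq_iff _ i hi]
    refine ⟨⟨?_, ?_⟩, ?_⟩
    · intro y hy
      have hy' : (y : ℕ) < i := hy
      rw [Fin.lt_def, buildPerm_val_lt τ ρ y ⟨(y : ℕ), hy'⟩ hy' rfl,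
        buildPerm_val_eq τ ρ ⟨i, hi⟩ rfl]
      exact (τ ⟨(y : ℕ), hy'⟩).isLt
    · intro y hy
      have hy' : i < (y : ℕ) := hy
      rw [Fin.lt_def, buildPerm_val_eq τ ρ ⟨i, hi⟩ rfl, buildPerm_apply,
        bfun_val_gt τ ρ y hy']
      omega
    · intro w hw hSb
      apply hτ
      refine ⟨⟨(w : ℕ), hw⟩, ?_, ?_⟩
      · intro x hx
        have hx' : (x : ℕ) < (w : ℕ) := hx
        have h1 := hSb.1 (Fin.castLE hle x) (show Fin.castLE hle x < w from hx')
        rw [Fin.lt_def, buildPerm_val_lt τ ρ (Fin.castLE hle x) x x.isLt rfl,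
          buildPerm_val_lt τ ρ w ⟨(w : ℕ), hw⟩ hw rfl] at h1
        exact h1
      · intro x hx
        have hx' : (w : ℕ) < (x : ℕ) := hx
        have h1 := hSb.2 (Fin.castLE hle x) (show w < Fin.castLE hle x from hx')
        rw [Fin.lt_def, buildPerm_val_lt τ ρ (Fin.castLE hle x) x x.isLt rfl,
          buildPerm_val_lt τ ρ w ⟨(w : ℕ), hw⟩ hw rfl] at h1
        exact h1
  · -- injectivity
    intro p hp q hq heq
    obtain ⟨τ, ρ⟩ := p
    obtain ⟨τ', ρ'⟩ := q
    simp only at heq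
    refine Prod.ext ?_ ?_
    · apply Equiv.ext
      intro x
      apply Fin.ext
      have hv : (buildPerm τ ρ (Fin.castLE hle x) : ℕ)
          = (buildPerm τ' ρ' (Fin.castLE hle x) : ℕ) := by rw [heq]
      rwa [buildPerm_val_lt τ ρ (Fin.castLE hle x) x x.isLt rfl,
        buildPerm_val_lt τ' ρ' (Fin.castLE hle x) x x.isLt rfl] at hv
    · apply Equiv.ext
      intro x
      apply Fin.ext
      have hxb : i + 1 + (x : ℕ) < i + 1 + j := by have := x.isLt; omega
      have hv : (buildPerm τ ρ ⟨i + 1 + (x : ℕ), hxb⟩ : ℕ)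
          = (buildPerm τ' ρ' ⟨i + 1 + (x : ℕ), hxb⟩ : ℕ) := by rw [heq]
      rw [buildPerm_val_gt τ ρ _ x (show i < i + 1 + (x : ℕ) by omega)
          (show (x : ℕ) = i + 1 + (x : ℕ) - (i + 1) by omega),
        buildPerm_val_gt τ' ρ' _ x (show i < i + 1 + (x : ℕ) by omega)
          (show (x : ℕ) = i + 1 + (x : ℕ) - (i + 1) by omega)] at hv
      show (ρ x : ℕ) = (ρ' x : ℕ)
      omega
  · -- surjectivity
    intro σ hσ
    rw [Finset.mem_filter, minIdx_eq_iff _ i hi] at hσ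
    obtain ⟨-, hS, hmin⟩ := hσ
    have hfix : (σ ⟨i, hi⟩ : ℕ) = i := sfp_val σ ⟨i, hi⟩ hS
    have hlt : ∀ k : Fin (i + 1 + j), (k : ℕ) < i → (σ k : ℕ) < i := by
      intro k hk
      have h1 := hS.1 k (show k < ⟨i, hi⟩ from hk)
      rw [Fin.lt_def, hfix] at h1
      exact h1
    have hgt : ∀ k : Fin (i + 1 + j), i < (k : ℕ) → i < (σ k : ℕ) := by
      intro k hk
      have h1 := hS.2 k (show (⟨i, hi⟩ : Fin (i + 1 + j)) < k from hk)
      rw [Fin.lt_def, hfix] at h1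
      exact h1
    -- restriction to the first block
    have tdef : ∀ x : Fin i, (σ (Fin.castLE hle x) : ℕ) < i :=
      fun x => hlt (Fin.castLE hle x) x.isLt
    set t : Fin i → Fin i := fun x => ⟨(σ (Fin.castLE hle x) : ℕ), tdef x⟩ with htdef
    have tinj : Function.Injective t := by
      intro a b hab
      rw [Fin.ext_iff] at hab
      have h1 : σ (Fin.castLE hle a) = σ (Fin.castLE hle b) := Fin.ext hab
      have h2 := σ.injective h1
      rw [Fin.ext_iff] at h2
      exact Fin.ext h2
    set τ : Equiv.Perm (Fin i) :=
      Equiv.ofBijective t (Finite.injective_iff_bijective.mp tinj) with hτdef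
    -- restriction to the last block
    have hrb : ∀ x : Fin j, i + 1 + (x : ℕ) < i + 1 + j := by
      intro x; have := x.isLt; omega
    have rdef : ∀ x : Fin j, (σ ⟨i + 1 + (x : ℕ), hrb x⟩ : ℕ) - (i + 1) < j := by
      intro x
      have h1 := hgt ⟨i + 1 + (x : ℕ), hrb x⟩ (show i < i + 1 + (x : ℕ) by omega)
      have h2 := (σ ⟨i + 1 + (x : ℕ), hrb x⟩).isLt
      omega
    set r : Fin j → Fin j :=
      fun x => ⟨(σ ⟨i + 1 + (x : ℕ), hrb x⟩ : ℕ) - (i + 1), rdef x⟩ with hrdef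
    have rinj : Function.Injective r := by
      intro a b hab
      rw [Fin.ext_iff] at hab
      have ha := hgt ⟨i + 1 + (a : ℕ), hrb a⟩ (show i < i + 1 + (a : ℕ) by omega)
      have hb := hgt ⟨i + 1 + (b : ℕ), hrb b⟩ (show i < i + 1 + (b : ℕ) by omega)
      have h1 : σ ⟨i + 1 + (a : ℕ), hrb a⟩ = σ ⟨i + 1 + (b : ℕ), hrb b⟩ :=
        Fin.ext (by simp only [hrdef] at hab; omega)
      have h2 := σ.injective h1
      rw [Fin.ext_iff] at h2
      simp only at h2
      exact Fin.ext (by omega)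
    set ρ : Equiv.Perm (Fin j) :=
      Equiv.ofBijective r (Finite.injective_iff_bijective.mp rinj) with hρdef
    refine ⟨(τ, ρ), ?_, ?_⟩
    · -- membership in the product
      rw [Finset.mem_product, Finset.mem_filter]
      refine ⟨⟨Finset.mem_univ _, ?_⟩, Finset.mem_univ _⟩
      rintro ⟨w, hw⟩
      obtain ⟨hw1, hw2⟩ := hw
      have hwlt : ((Fin.castLE hle w : Fin (i + 1 + j)) : ℕ) < i := w.isLt
      apply hmin (Fin.castLE hle w) hwlt
      constructor
      · intro y hy
        have hy' : (y : ℕ) < (w : ℕ) := hy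
        have hyi : (y : ℕ) < i := lt_trans hy' w.isLt
        have h1 := hw1 ⟨(y : ℕ), hyi⟩ (show (⟨(y : ℕ), hyi⟩ : Fin i) < w from hy')
        have h2 : (σ (Fin.castLE hle ⟨(y : ℕ), hyi⟩) : ℕ) < (σ (Fin.castLE hle w) : ℕ) :=
          Fin.lt_def.mp h1
        rw [Fin.lt_def]
        have h3 : σ (Fin.castLE hle ⟨(y : ℕ), hyi⟩) = σ y := congrArg σ (Fin.ext rfl)
        rw [h3] at h2
        exact h2
      · intro y hy
        have hy' : (w : ℕ) < (y : ℕ) := hy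
        rw [Fin.lt_def]
        rcases lt_trichotomy (y : ℕ) i with h' | h' | h'
        · have h1 := hw2 ⟨(y : ℕ), h'⟩ (show w < (⟨(y : ℕ), h'⟩ : Fin i) from hy')
          have h2 : (σ (Fin.castLE hle w) : ℕ) < (σ (Fin.castLE hle ⟨(y : ℕ), h'⟩) : ℕ) :=
            Fin.lt_def.mp h1
          have h3 : σ (Fin.castLE hle ⟨(y : ℕ), h'⟩) = σ y := congrArg σ (Fin.ext rfl)
          rw [h3] at h2
          exact h2
        · have h1 : σ y = σ ⟨i, hi⟩ := congrArg σ (Fin.ext h')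
          have h2 := hlt (Fin.castLE hle w) w.isLt
          rw [h1, hfix]
          exact h2
        · have h1 := hgt y h'
          have h2 := hlt (Fin.castLE hle w) w.isLt
          omega
    · -- buildPerm τ ρ = σ
      apply Equiv.ext
      intro k
      apply Fin.ext
      rcases lt_trichotomy (k : ℕ) i with h' | h' | h'
      · rw [buildPerm_val_lt τ ρ k ⟨(k : ℕ), h'⟩ h' rfl]
        have h2 : σ (Fin.castLE hle ⟨(k : ℕ), h'⟩) = σ k := congrArg σ (Fin.ext rfl)
        show (t ⟨(k : ℕ), h'⟩ : ℕ) = (σ k : ℕ)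
        rw [htdef]
        simp only
        rw [h2]
      · rw [buildPerm_val_eq τ ρ k h']
        rw [show k = ⟨i, hi⟩ from Fin.ext h', hfix]
      · have hx : (k : ℕ) - (i + 1) < j := by have := k.isLt; omega
        rw [buildPerm_val_gt τ ρ k ⟨(k : ℕ) - (i + 1), hx⟩ h' rfl]
        show i + 1 + (r ⟨(k : ℕ) - (i + 1), hx⟩ : ℕ) = (σ k : ℕ)
        rw [hrdef]
        simp only
        have harg : (⟨i + 1 + ((⟨(k : ℕ) - (i + 1), hx⟩ : Fin j) : ℕ),
            hrb ⟨(k : ℕ) - (i + 1), hx⟩⟩ : Fin (i + 1 + j)) = k :=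
          Fin.ext (by simp only; omega)
        rw [harg]
        have := hgt k h'
        omega

end AvoidAux

/-- For all `n ≥ 1`, `n! = a_n + ∑_{i=0}^{n-1} a_i · (n-1-i)!`. -/
theorem avoidCount_recurrence (n : ℕ) (hn : 1 ≤ n) :
    n.factorial =
      avoidCount n + ∑ i ∈ Finset.range n, avoidCount i * (n - 1 - i).factorial := by
  have h0 : (Finset.univ : Finset (Equiv.Perm (Fin n))).card = n.factorial := by
    rw [Finset.card_univ, Fintype.card_perm, Fintype.card_fin]
  have h1 := Finset.card_eq_sum_card_fiberwise
    (f := AvoidAux.minIdx) (s := (Finset.univ : Finset (Equiv.Perm (Fin n))))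
    (t := Finset.range (n + 1))
    (fun σ _ => Finset.mem_range.mpr (Nat.lt_succ_of_le (AvoidAux.minIdx_le σ)))
  rw [h0, Finset.sum_range_succ] at h1
  have h2 : ((Finset.univ : Finset (Equiv.Perm (Fin n))).filter
      fun σ => AvoidAux.minIdx σ = n).card = avoidCount n := by
    rw [AvoidAux.avoidCount_eq]
    congr 1
    apply Finset.filter_congr
    intro σ _
    rw [AvoidAux.minIdx_eq_n_iff]
  have h3 : ∀ i ∈ Finset.range n,
      ((Finset.univ : Finset (Equiv.Perm (Fin n))).filter
        fun σ => AvoidAux.minIdx σ = i).card = avoidCount i * (n - 1 - i).factorial := by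
    intro i hi
    rw [Finset.mem_range] at hi
    obtain ⟨j, hj1, hj2⟩ : ∃ j, n - 1 - i = j ∧ n = i + 1 + j := ⟨n - 1 - i, rfl, by omega⟩
    rw [hj1]
    subst hj2
    exact AvoidAux.fiber_card i j
  rw [Finset.sum_congr rfl h3, h2] at h1
  omega
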